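/- For all real θ not in 2πℤ and all t ≥ 0, one has log|1 - e^{iθ}| ≤ log|1 - e^{-t}e^{iθ}| + t/2. -/

import Mathlib

theorem stmt_0 (θ : ℝ) (hθ : ∀ k : ℤ, θ ≠ 2 * Real.pi * k) (t : ℝ) (ht : 0 ≤ t) :
    Real.log ‖1 - Complex.exp (θ * Complex.I)‖ ≤
      Real.log ‖1 - Real.exp (-t) * Complex.exp (θ * Complex.I)‖ + t / 2 := by
  have hc : Real.cos θ < 1 := by
    rcases lt_or_eq_of_le (Real.cos_le_one θ) with h | h
    · exact h
    · exfalso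
      obtain ⟨n, hn⟩ := (Real.cos_eq_one_iff θ).mp h
      exact hθ n (by linarith)
  set a := ‖1 - Complex.exp (θ * Complex.I)‖ with ha_def
  set b := ‖1 - Real.exp (-t) * Complex.exp (θ * Complex.I)‖ with hb_def
  set r := Real.exp (-t) with hr_def
  have hr : 0 < r := Real.exp_pos _
  have ha2 : a ^ 2 = 2 - 2 * Real.cos θ := by
    rw [ha_def, Complex.sq_norm, Complex.exp_mul_I, Complex.normSq_apply]
    simp [Complex.cos_ofReal_re, Complex.sin_ofReal_re]
    nlinarith [Real.sin_sq_add_cos_sq θ]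
  have hb2 : b ^ 2 = 1 - 2 * r * Real.cos θ + r ^ 2 := by
    rw [hb_def, Complex.sq_norm, Complex.exp_mul_I, Complex.normSq_apply]
    simp [Complex.cos_ofReal_re, Complex.sin_ofReal_re]
    nlinarith [Real.sin_sq_add_cos_sq θ]
  have ha : 0 < a := by
    have h1 : 0 < a ^ 2 := by rw [ha2]; linarith
    have h0 : 0 ≤ a := norm_nonneg _
    nlinarith
  have hb : 0 < b := by
    have h1 : 0 < b ^ 2 := by rw [hb2]; nlinarith [sq_nonneg (1 - r)]
    have h0 : 0 ≤ b := norm_nonneg _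
    nlinarith
  have hrt : Real.exp t * r = 1 := by rw [hr_def, ← Real.exp_add]; simp
  have key : a ^ 2 ≤ Real.exp t * b ^ 2 := by
    rw [ha2, hb2]
    have h1 := Real.add_one_le_exp t
    have h2 := Real.add_one_le_exp (-t)
    nlinarith [Real.exp_pos t]
  have hab : a ≤ Real.exp (t / 2) * b := by
    have he : Real.exp (t / 2) * Real.exp (t / 2) = Real.exp t := by
      rw [← Real.exp_add]; ring_nf
    by_contra h
    push_neg at h
    have hp : 0 < Real.exp (t / 2) * b := mul_pos (Real.exp_pos _) hb
    have h2 : (Real.exp (t / 2) * b) ^ 2 < a ^ 2 := by nlinarith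
    nlinarith [h2, key, he]
  calc Real.log a ≤ Real.log (Real.exp (t / 2) * b) := Real.log_le_log ha hab
    _ = t / 2 + Real.log b := by
        rw [Real.log_mul (Real.exp_ne_zero _) hb.ne', Real.log_exp]
    _ = Real.log b + t / 2 := by ring
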